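/- Let â(z) be a polynomial of degree n with real coefficients such that â(z) and â(−z) are relatively prime. Then for each 1 ≤ i ≤ n and each sign ⋆ ∈ {+,−} there exists a unique polynomial p_i^⋆(z) of degree less than n such that â(z)·p_i^⋆(z) ⋆ â(−z)·p_i^⋆(−z) = 2·z^{2i−ℓ^⋆}, where ℓ^+ = 2 and ℓ^− = 1. -/

import Mathlib

open Polynomial

private lemma invol (p : Polynomial ℝ) : (p.comp (-X)).comp (-X) = p := by
  rw [Polynomial.comp_assoc]; simp

private lemma compI_ne_zero {p : Polynomial ℝ} (hp : p ≠ 0) : p.comp (-X) ≠ 0 := by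
  intro h
  have := congrArg (fun q => q.comp (-X)) h
  simp only [invol, zero_comp] at this
  exact hp this

private lemma natDegree_compI (p : Polynomial ℝ) : (p.comp (-X)).natDegree = p.natDegree := by
  rw [natDegree_comp]; simp

private lemma degree_compI (p : Polynomial ℝ) : (p.comp (-X)).degree = p.degree := by
  rcases eq_or_ne p 0 with rfl | hp
  · simp
  · rw [degree_eq_natDegree (compI_ne_zero hp), degree_eq_natDegree hp, natDegree_compI]

private lemma deg_mul_lt {n : ℕ} {a p : Polynomial ℝ} (ha : a.degree = (n : ℕ))
    (hp : p.degree < (n : ℕ)) : (a * p).degree < ((2 * n : ℕ) : WithBot ℕ) := by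
  rw [degree_mul, ha]
  calc (n : WithBot ℕ) + p.degree < (n : WithBot ℕ) + (n : ℕ) := by
        exact WithBot.add_lt_add_left (by simp) hp
    _ = ((2 * n : ℕ) : WithBot ℕ) := by push_cast; ring

private lemma key (n : ℕ) (ahat : Polynomial ℝ)
    (hdeg : ahat.natDegree = n) (hahat : ahat ≠ 0)
    (hcop : IsCoprime ahat (ahat.comp (-X)))
    (ε : ℝ) (hε2 : ε * ε = 1) (f : Polynomial ℝ)
    (hf : f.comp (-X) = C ε * f)
    (hfd : f.degree < ((2 * n : ℕ) : WithBot ℕ)) :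
    ∃! p : Polynomial ℝ, p.degree < (n : ℕ) ∧
      ahat * p + C ε * (ahat.comp (-X) * p.comp (-X)) = f := by
  have hεne : ε ≠ 0 := by intro h; rw [h, zero_mul] at hε2; norm_num at hε2
  have hCε : C ε * C ε = 1 := by rw [← C_mul, hε2, C_1]
  set b : Polynomial ℝ := ahat.comp (-X) with hb
  have hbne : b ≠ 0 := compI_ne_zero hahat
  have hbdeg : b.degree = (n : ℕ) := by
    rw [hb, degree_compI, degree_eq_natDegree hahat, hdeg]
  have hadeg : ahat.degree = (n : ℕ) := by rw [degree_eq_natDegree hahat, hdeg]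
  have hbI : b.comp (-X) = ahat := invol ahat
  -- Existence
  obtain ⟨u, v, huv⟩ := hcop
  set q : Polynomial ℝ := u * f with hq
  set r : Polynomial ℝ := v * f with hr
  have hA : ahat * q + b * r = f := by
    rw [hq, hr]
    calc ahat * (u * f) + b * (v * f) = (u * ahat + v * b) * f := by ring
      _ = f := by rw [huv, one_mul]
  have hB : b * q.comp (-X) + ahat * r.comp (-X) = C ε * f := by
    have := congrArg (fun p => p.comp (-X)) hA
    simpa only [add_comp, mul_comp, hbI, hf] using this
  set p0 : Polynomial ℝ := C (1/2 : ℝ) * (q + C ε * r.comp (-X)) with hp0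
  have hp0I : p0.comp (-X) = C (1/2 : ℝ) * (q.comp (-X) + C ε * r) := by
    simp only [hp0, mul_comp, add_comp, C_comp, invol]
  have hmain : ahat * p0 + C ε * (b * p0.comp (-X)) = f := by
    rw [hp0, hp0I]
    have hhalf : (C (1/2 : ℝ) : Polynomial ℝ) * 2 = 1 := by
      rw [show (2 : Polynomial ℝ) = C 2 from (map_ofNat C 2).symm, ← C_mul]; norm_num
    linear_combination (C (1/2 : ℝ)) * hA + C (1/2 : ℝ) * C ε * hB
      + (C (1/2 : ℝ) * (b * r + f)) * hCε + f * hhalf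
  -- reduce p0 mod b
  set m : Polynomial ℝ := b * C b.leadingCoeff⁻¹ with hm
  have hmonic : m.Monic := monic_mul_leadingCoeff_inv hbne
  set p : Polynomial ℝ := p0 %ₘ m with hpdef
  have hpdeg : p.degree < (n : ℕ) := by
    have := degree_modByMonic_lt p0 hmonic
    rwa [hm, degree_mul_leadingCoeff_inv b hbne, hbdeg] at this
  set k : Polynomial ℝ := C b.leadingCoeff⁻¹ * (p0 /ₘ m) with hk
  have hsplit : p0 = p + b * k := by
    conv_lhs => rw [← modByMonic_add_div p0 m]
    rw [hpdef, hk, hm]; ring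
  have hpI : p0.comp (-X) = p.comp (-X) + ahat * k.comp (-X) := by
    have := congrArg (fun x => x.comp (-X)) hsplit
    simpa only [add_comp, mul_comp, hbI] using this
  set g : Polynomial ℝ := k + C ε * k.comp (-X) with hg
  have hE : ahat * p + C ε * (b * p.comp (-X)) + ahat * b * g = f := by
    rw [hg]
    calc ahat * p + C ε * (b * p.comp (-X)) + ahat * b * (k + C ε * k.comp (-X))
        = ahat * (p + b * k) + C ε * (b * (p.comp (-X) + ahat * k.comp (-X))) := by ring
      _ = ahat * p0 + C ε * (b * p0.comp (-X)) := by rw [← hsplit, ← hpI]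
      _ = f := hmain
  have hg0 : g = 0 := by
    by_contra hgne
    have h1 : ahat * b * g ≠ 0 := mul_ne_zero (mul_ne_zero hahat hbne) hgne
    have h2 : (ahat * b * g).degree < ((2 * n : ℕ) : WithBot ℕ) := by
      have e1 : ahat * b * g = f - ahat * p - C ε * (b * p.comp (-X)) := by
        rw [← hE]; ring
      rw [e1]
      have d1 : (ahat * p).degree < ((2 * n : ℕ) : WithBot ℕ) := deg_mul_lt hadeg hpdeg
      have d2 : (C ε * (b * p.comp (-X))).degree < ((2 * n : ℕ) : WithBot ℕ) := by
        rw [mul_comm (C ε), mul_assoc, degree_mul, hbdeg]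
        have : (p.comp (-X) * C ε).degree < (n : ℕ) := by
          rw [degree_mul, degree_C hεne, add_zero, degree_compI]; exact hpdeg
        calc (n : WithBot ℕ) + (p.comp (-X) * C ε).degree
            < (n : WithBot ℕ) + (n : ℕ) := WithBot.add_lt_add_left (by simp) this
          _ = ((2 * n : ℕ) : WithBot ℕ) := by push_cast; ring
      calc (f - ahat * p - C ε * (b * p.comp (-X))).degree
          ≤ max (f - ahat * p).degree (C ε * (b * p.comp (-X))).degree := degree_sub_le _ _
        _ < ((2 * n : ℕ) : WithBot ℕ) := by
            refine max_lt ?_ d2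
            exact lt_of_le_of_lt (degree_sub_le _ _) (max_lt hfd d1)
    have h3 : (ahat * b * g).natDegree < 2 * n :=
      (natDegree_lt_iff_degree_lt h1).mpr h2
    have h4 : (ahat * b * g).natDegree = n + n + g.natDegree := by
      rw [natDegree_mul (mul_ne_zero hahat hbne) hgne, natDegree_mul hahat hbne,
        hdeg, hb, natDegree_compI, hdeg]
    omega
  have hex : ahat * p + C ε * (b * p.comp (-X)) = f := by
    rw [← hE, hg0]; ring
  refine ⟨p, ⟨hpdeg, hex⟩, ?_⟩
  -- Uniqueness
  rintro p' ⟨hp'deg, hp'eq⟩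
  set d : Polynomial ℝ := p' - p with hd
  have hdI : d.comp (-X) = p'.comp (-X) - p.comp (-X) := by simp [hd, sub_comp]
  have hhom : ahat * d = b * (-(C ε * d.comp (-X))) := by
    have : ahat * p' + C ε * (b * p'.comp (-X))
        - (ahat * p + C ε * (b * p.comp (-X))) = 0 := by rw [hp'eq, hex, sub_self]
    rw [hd, hdI]; linear_combination this
  have hdvd : ahat ∣ -(C ε * d.comp (-X)) := by
    have hcop' : IsCoprime ahat b := ⟨u, v, huv⟩
    exact hcop'.dvd_of_dvd_mul_left ⟨d, hhom.symm⟩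
  have hzero : -(C ε * d.comp (-X)) = 0 := by
    apply eq_zero_of_dvd_of_degree_lt hdvd
    calc (-(C ε * d.comp (-X))).degree = (C ε * d.comp (-X)).degree := degree_neg _
      _ = d.degree := by rw [degree_mul, degree_C hεne, zero_add, degree_compI]
      _ < (n : ℕ) := by
          rw [hd]
          exact lt_of_le_of_lt (degree_sub_le _ _) (max_lt hp'deg hpdeg)
      _ = ahat.degree := hadeg.symm
  have hdI0 : d.comp (-X) = 0 := by
    have := neg_eq_zero.mp hzero
    rcases mul_eq_zero.mp this with h | h
    · exact absurd h (by simp [hεne])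
    · exact h
  have hd0 : d = 0 := by
    have := congrArg (fun x => x.comp (-X)) hdI0
    simpa only [invol, zero_comp] using this
  rw [hd] at hd0
  exact sub_eq_zero.mp hd0

theorem unique_bezout_solutions (n : ℕ) (ahat : Polynomial ℝ)
    (hdeg : ahat.natDegree = n) (hahat : ahat ≠ 0)
    (hcop : IsCoprime ahat (ahat.comp (-X))) :
    ∀ i : ℕ, 1 ≤ i → i ≤ n →
      (∃! p : Polynomial ℝ, p.degree < (n : ℕ) ∧
        ahat * p + (ahat.comp (-X)) * (p.comp (-X)) = C 2 * X ^ (2 * i - 2)) ∧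
      (∃! p : Polynomial ℝ, p.degree < (n : ℕ) ∧
        ahat * p - (ahat.comp (-X)) * (p.comp (-X)) = C 2 * X ^ (2 * i - 1)) := by
  intro i hi1 hin
  have hn1 : 1 ≤ n := le_trans hi1 hin
  constructor
  · have hf : ((C 2 * X ^ (2 * i - 2) : Polynomial ℝ)).comp (-X)
        = C (1 : ℝ) * (C 2 * X ^ (2 * i - 2)) := by
      have heven : Even (2 * i - 2) := ⟨i - 1, by omega⟩
      simp [mul_comp, pow_comp, heven.neg_pow]
    have hfd : ((C 2 * X ^ (2 * i - 2) : Polynomial ℝ)).degree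
        < ((2 * n : ℕ) : WithBot ℕ) := by
      rw [degree_mul, degree_C (by norm_num : (2:ℝ) ≠ 0), zero_add, degree_X_pow]
      exact_mod_cast (by omega : 2 * i - 2 < 2 * n)
    have h := key n ahat hdeg hahat hcop 1 (by norm_num) _ hf hfd
    simpa only [map_one, one_mul] using h
  · have hf : ((C 2 * X ^ (2 * i - 1) : Polynomial ℝ)).comp (-X)
        = C (-1 : ℝ) * (C 2 * X ^ (2 * i - 1)) := by
      have hodd : Odd (2 * i - 1) := ⟨i - 1, by omega⟩
      simp only [mul_comp, C_comp, pow_comp, X_comp, hodd.neg_pow, map_neg, map_one,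
        neg_mul, one_mul, mul_neg]
    have hfd : ((C 2 * X ^ (2 * i - 1) : Polynomial ℝ)).degree
        < ((2 * n : ℕ) : WithBot ℕ) := by
      rw [degree_mul, degree_C (by norm_num : (2:ℝ) ≠ 0), zero_add, degree_X_pow]
      exact_mod_cast (by omega : 2 * i - 1 < 2 * n)
    have h := key n ahat hdeg hahat hcop (-1) (by norm_num) _ hf hfd
    simpa only [map_neg, map_one, neg_mul, one_mul, ← sub_eq_add_neg] using h
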